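/- Let ρ be a d×d density matrix and let U₁,…,U_N (N ≥ 3) be d×d unitary matrices. Then ∑_{s=1}^{N} I_ρ(U_s) ≥ (1/(N−2)) { ∑_{1≤s<t≤N} I_ρ(U_s + U_t) − (1/(N−1)²) [ ∑_{1≤s<t≤N} √( I_ρ(U_s + U_t) ) ]² }. -/

import Mathlib

open Matrix Finset
open scoped ComplexOrder

/-- The positive semidefinite square root, as `Matrix.PosSemidef.sqrt` was defined in Mathlib
(December 2024); it was removed from Mathlib since. -/
noncomputable def Matrix.PosSemidef.sqrt {n 𝕜 : Type*} [Fintype n] [RCLike 𝕜] [DecidableEq n]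
    {A : Matrix n n 𝕜} (hA : A.PosSemidef) : Matrix n n 𝕜 :=
  hA.1.eigenvectorUnitary.1 * diagonal ((↑) ∘ (√·) ∘ hA.1.eigenvalues) *
    (star hA.1.eigenvectorUnitary : Matrix n n 𝕜)

/-- Wigner–Yanase skew information `I_ρ(A) = (1/2) Tr([√ρ, A]† [√ρ, A])` of a matrix `A`
with respect to a positive semidefinite matrix `ρ`, where `√ρ = hρ.sqrt` is the positive
semidefinite square root of `ρ`. -/
noncomputable def skewInfo {d : ℕ} {ρ : Matrix (Fin d) (Fin d) ℂ} (hρ : ρ.PosSemidef)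
    (A : Matrix (Fin d) (Fin d) ℂ) : ℝ :=
  (1 / 2 : ℝ) *
    (((hρ.sqrt * A - A * hρ.sqrt)ᴴ * (hρ.sqrt * A - A * hρ.sqrt)).trace).re

section Aux

lemma auxComplSumEq {N : ℕ} {M : Type*} [AddCommGroup M] (v : Fin N → M) (i : Fin N) :
    ∑ j ∈ ({i}ᶜ : Finset (Fin N)), v j = (∑ j, v j) - v i := by
  rw [eq_sub_iff_add_eq, ← Finset.sum_singleton v i, Finset.sum_compl_add_sum]

lemma auxSplitDouble {N : ℕ} {M : Type*} [AddCommGroup M] (f : Fin N → Fin N → M) :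
    ∑ i : Fin N, ∑ j ∈ Ioi i, (f j i + f i j) = ∑ i : Fin N, ((∑ j, f j i) - f i i) := by
  have h := sum_sum_Ioi_add_eq_sum_sum_off_diag f
  have h2 : ∑ i : Fin N, ∑ j ∈ ({i}ᶜ : Finset (Fin N)), f j i
      = ∑ i : Fin N, ((∑ j, f j i) - f i i) :=
    Finset.sum_congr rfl fun i _ => auxComplSumEq _ i
  rw [← h2]
  convert h using 4

lemma auxPairSumVec {N : ℕ} {M : Type*} [AddCommGroup M] (v : Fin N → M) :
    ∑ s : Fin N, ∑ t ∈ Ioi s, (v s + v t) = (N : ℕ) • (∑ s, v s) - ∑ s, v s := by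
  calc ∑ s : Fin N, ∑ t ∈ Ioi s, (v s + v t)
      = ∑ i : Fin N, ∑ j ∈ Ioi i, ((fun j (_ : Fin N) => v j) j i
          + (fun j (_ : Fin N) => v j) i j) := by
        exact Finset.sum_congr rfl fun i _ => Finset.sum_congr rfl fun j _ => add_comm _ _
    _ = ∑ i : Fin N, ((∑ j, v j) - v i) := auxSplitDouble _
    _ = (N : ℕ) • (∑ s, v s) - ∑ s, v s := by
        rw [Finset.sum_sub_distrib, Finset.sum_const, Finset.card_univ, Fintype.card_fin]

lemma auxPairSumReal {N : ℕ} (a : Fin N → ℝ) :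
    ∑ s : Fin N, ∑ t ∈ Ioi s, (a s + a t) = ((N : ℝ) - 1) * ∑ s, a s := by
  rw [auxPairSumVec a]; push_cast [nsmul_eq_mul]; ring

variable {V : Type*} [NormedAddCommGroup V] [InnerProductSpace ℂ V]

lemma auxKeyIdentity {N : ℕ} (v : Fin N → V) :
    ∑ s : Fin N, ∑ t ∈ Ioi s, ‖v s + v t‖ ^ 2
      = ((N : ℝ) - 2) * ∑ s, ‖v s‖ ^ 2 + ‖∑ s, v s‖ ^ 2 := by
  have hsumsq : ‖∑ s, v s‖ ^ 2
      = ∑ s : Fin N, ∑ t : Fin N, RCLike.re (inner (𝕜 := ℂ) (v s) (v t)) := by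
    rw [← inner_self_eq_norm_sq (𝕜 := ℂ), sum_inner, map_sum]
    exact Finset.sum_congr rfl fun s _ => by rw [inner_sum, map_sum]
  have hcross : ∑ s : Fin N, ∑ t ∈ Ioi s, (2 * RCLike.re (inner (𝕜 := ℂ) (v s) (v t)))
      = ‖∑ s, v s‖ ^ 2 - ∑ s, ‖v s‖ ^ 2 := by
    rw [hsumsq]
    calc ∑ s : Fin N, ∑ t ∈ Ioi s, (2 * RCLike.re (inner (𝕜 := ℂ) (v s) (v t)))
        = ∑ i : Fin N, ∑ j ∈ Ioi i, ((fun t s : Fin N => RCLike.re (inner (𝕜 := ℂ) (v s) (v t))) j i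
            + (fun t s : Fin N => RCLike.re (inner (𝕜 := ℂ) (v s) (v t))) i j) := by
          refine Finset.sum_congr rfl fun s _ => Finset.sum_congr rfl fun t _ => ?_
          simp only
          rw [inner_re_symm (v t) (v s)]; ring
      _ = ∑ i : Fin N, ((∑ j : Fin N, RCLike.re (inner (𝕜 := ℂ) (v i) (v j)))
            - RCLike.re (inner (𝕜 := ℂ) (v i) (v i))) := auxSplitDouble _
      _ = (∑ s : Fin N, ∑ t : Fin N, RCLike.re (inner (𝕜 := ℂ) (v s) (v t)))
            - ∑ s, ‖v s‖ ^ 2 := by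
          rw [Finset.sum_sub_distrib]
          congr 1
          exact Finset.sum_congr rfl fun i _ => by rw [inner_self_eq_norm_sq (𝕜 := ℂ)]
  have hnorms : ∑ s : Fin N, ∑ t ∈ Ioi s, (‖v s‖ ^ 2 + ‖v t‖ ^ 2)
      = ((N : ℝ) - 1) * ∑ s, ‖v s‖ ^ 2 := auxPairSumReal _
  calc ∑ s : Fin N, ∑ t ∈ Ioi s, ‖v s + v t‖ ^ 2
      = ∑ s : Fin N, ∑ t ∈ Ioi s, ((‖v s‖ ^ 2 + ‖v t‖ ^ 2)
          + 2 * RCLike.re (inner (𝕜 := ℂ) (v s) (v t))) := by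
        refine Finset.sum_congr rfl fun s _ => Finset.sum_congr rfl fun t _ => ?_
        rw [norm_add_sq (𝕜 := ℂ)]; ring
    _ = (∑ s : Fin N, ∑ t ∈ Ioi s, (‖v s‖ ^ 2 + ‖v t‖ ^ 2))
          + ∑ s : Fin N, ∑ t ∈ Ioi s, (2 * RCLike.re (inner (𝕜 := ℂ) (v s) (v t))) := by
        rw [← Finset.sum_add_distrib]
        exact Finset.sum_congr rfl fun s _ => Finset.sum_add_distrib
    _ = ((N : ℝ) - 1) * ∑ s, ‖v s‖ ^ 2 + (‖∑ s, v s‖ ^ 2 - ∑ s, ‖v s‖ ^ 2) := by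
        rw [hnorms, hcross]
    _ = ((N : ℝ) - 2) * ∑ s, ‖v s‖ ^ 2 + ‖∑ s, v s‖ ^ 2 := by ring

lemma auxTriangle {N : ℕ} (v : Fin N → V) :
    ((N : ℝ) - 1) * ‖∑ s, v s‖ ≤ ∑ s : Fin N, ∑ t ∈ Ioi s, ‖v s + v t‖ := by
  have h1 : ((N : ℝ) - 1) * ‖∑ s, v s‖ = ‖((N : ℝ) - 1) • (∑ s, v s)‖ ∨ N = 0 := by
    rcases Nat.eq_zero_or_pos N with h | h
    · exact Or.inr h
    · left
      rw [norm_smul, Real.norm_eq_abs, abs_of_nonneg (by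
          have : (1 : ℝ) ≤ (N : ℝ) := by exact_mod_cast h
          linarith)]
  rcases h1 with h1 | h1
  · rw [h1]
    have h2 : ((N : ℝ) - 1) • (∑ s, v s) = ∑ s : Fin N, ∑ t ∈ Ioi s, (v s + v t) := by
      rw [auxPairSumVec v]
      rw [sub_smul, one_smul]
      congr 1
      rw [← Nat.cast_smul_eq_nsmul ℝ]
    rw [h2]
    calc ‖∑ s : Fin N, ∑ t ∈ Ioi s, (v s + v t)‖
        ≤ ∑ s : Fin N, ‖∑ t ∈ Ioi s, (v s + v t)‖ := norm_sum_le _ _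
      _ ≤ ∑ s : Fin N, ∑ t ∈ Ioi s, ‖v s + v t‖ :=
          Finset.sum_le_sum fun s _ => norm_sum_le _ _
  · subst h1
    simp

end Aux

noncomputable def toEuc {d : ℕ} (X : Matrix (Fin d) (Fin d) ℂ) :
    EuclideanSpace ℂ (Fin d × Fin d) :=
  (WithLp.equiv 2 _).symm (fun p => X p.1 p.2)

lemma norm_toEuc_sq {d : ℕ} (X : Matrix (Fin d) (Fin d) ℂ) :
    ‖toEuc X‖ ^ 2 = ((Xᴴ * X).trace).re := by
  rw [EuclideanSpace.norm_eq, Real.sq_sqrt (by positivity)]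
  simp only [Matrix.trace, Matrix.diag_apply, Matrix.mul_apply, Matrix.conjTranspose_apply,
    Complex.re_sum, Fintype.sum_prod_type]
  rw [Finset.sum_comm]
  refine Finset.sum_congr rfl fun i _ => Finset.sum_congr rfl fun j _ => ?_
  simp [toEuc, Complex.mul_re, Complex.normSq_apply, Complex.sq_norm]

lemma skewInfo_eq {d : ℕ} {ρ : Matrix (Fin d) (Fin d) ℂ} (hρ : ρ.PosSemidef)
    (A : Matrix (Fin d) (Fin d) ℂ) :
    skewInfo hρ A = (1 / 2 : ℝ) * ‖toEuc (hρ.sqrt * A - A * hρ.sqrt)‖ ^ 2 := by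
  rw [skewInfo, norm_toEuc_sq]

lemma toEuc_comm_add {d : ℕ} {ρ : Matrix (Fin d) (Fin d) ℂ} (hρ : ρ.PosSemidef)
    (A B : Matrix (Fin d) (Fin d) ℂ) :
    toEuc (hρ.sqrt * (A + B) - (A + B) * hρ.sqrt)
      = toEuc (hρ.sqrt * A - A * hρ.sqrt) + toEuc (hρ.sqrt * B - B * hρ.sqrt) := by
  have : hρ.sqrt * (A + B) - (A + B) * hρ.sqrt
      = (hρ.sqrt * A - A * hρ.sqrt) + (hρ.sqrt * B - B * hρ.sqrt) := by
    noncomm_ring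
  rw [this]
  rfl

theorem stmt_5 {d N : ℕ} (hN : 3 ≤ N)
    (ρ : Matrix (Fin d) (Fin d) ℂ) (hρ : ρ.PosSemidef) (htr : ρ.trace = 1)
    (U : Fin N → Matrix (Fin d) (Fin d) ℂ)
    (hU : ∀ s, U s ∈ Matrix.unitaryGroup (Fin d) ℂ) :
    ∑ s, skewInfo hρ (U s) ≥
      (1 / ((N : ℝ) - 2)) *
        ((∑ s : Fin N, ∑ t ∈ Finset.Ioi s, skewInfo hρ (U s + U t))
          - (1 / ((N : ℝ) - 1) ^ 2) *
            (∑ s : Fin N, ∑ t ∈ Finset.Ioi s,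
              Real.sqrt (skewInfo hρ (U s + U t))) ^ 2) := by
  set v : Fin N → EuclideanSpace ℂ (Fin d × Fin d) :=
    fun s => toEuc (hρ.sqrt * U s - U s * hρ.sqrt) with hv
  have hskew : ∀ s, skewInfo hρ (U s) = (1 / 2 : ℝ) * ‖v s‖ ^ 2 := fun s => skewInfo_eq hρ _
  have hskew2 : ∀ s t, skewInfo hρ (U s + U t) = (1 / 2 : ℝ) * ‖v s + v t‖ ^ 2 := by
    intro s t
    rw [skewInfo_eq hρ, toEuc_comm_add]
  have hsqrt : ∀ s t, Real.sqrt (skewInfo hρ (U s + U t))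
      = ‖v s + v t‖ / Real.sqrt 2 := by
    intro s t
    rw [hskew2]
    rw [show (1 / 2 : ℝ) * ‖v s + v t‖ ^ 2 = (‖v s + v t‖ / Real.sqrt 2) ^ 2 by
      rw [div_pow, Real.sq_sqrt (by norm_num)]; ring]
    exact Real.sqrt_sq (by positivity)
  set n : ℝ := (N : ℝ) with hn
  have hn3 : (3 : ℝ) ≤ n := by rw [hn]; exact_mod_cast hN
  have hn2 : (0 : ℝ) < n - 2 := by linarith
  have hn1 : (0 : ℝ) < (n - 1) ^ 2 := by nlinarith
  set S : ℝ := ∑ s, ‖v s‖ ^ 2 with hS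
  set Q : ℝ := ‖∑ s, v s‖ ^ 2 with hQ
  set P : ℝ := ∑ s : Fin N, ∑ t ∈ Ioi s, ‖v s + v t‖ with hP
  have hid : ∑ s : Fin N, ∑ t ∈ Ioi s, ‖v s + v t‖ ^ 2 = (n - 2) * S + Q := auxKeyIdentity v
  have htri : (n - 1) * ‖∑ s, v s‖ ≤ P := auxTriangle v
  have hQP : (n - 1) ^ 2 * Q ≤ P ^ 2 := by
    have h0 : (0 : ℝ) ≤ (n - 1) * ‖∑ s, v s‖ := mul_nonneg (by linarith) (norm_nonneg _)
    calc (n - 1) ^ 2 * Q = ((n - 1) * ‖∑ s, v s‖) ^ 2 := by rw [hQ]; ring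
      _ ≤ P ^ 2 := by nlinarith [htri]
  -- rewrite goal
  have hL : ∑ s, skewInfo hρ (U s) = S / 2 := by
    rw [hS, Finset.sum_div]
    exact Finset.sum_congr rfl fun s _ => by rw [hskew]; ring
  have hJ : ∑ s : Fin N, ∑ t ∈ Finset.Ioi s, skewInfo hρ (U s + U t)
      = ((n - 2) * S + Q) / 2 := by
    rw [← hid, Finset.sum_div]
    refine Finset.sum_congr rfl fun s _ => ?_
    rw [Finset.sum_div]
    exact Finset.sum_congr rfl fun t _ => by rw [hskew2]; ring
  have hT : ∑ s : Fin N, ∑ t ∈ Finset.Ioi s, Real.sqrt (skewInfo hρ (U s + U t))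
      = P / Real.sqrt 2 := by
    rw [hP, Finset.sum_div]
    refine Finset.sum_congr rfl fun s _ => ?_
    rw [Finset.sum_div]
    exact Finset.sum_congr rfl fun t _ => hsqrt s t
  rw [ge_iff_le, hL, hJ, hT]
  have hT2 : (P / Real.sqrt 2) ^ 2 = P ^ 2 / 2 := by
    rw [div_pow, Real.sq_sqrt (by norm_num)]
  rw [hT2]
  have hQle : Q ≤ P ^ 2 / (n - 1) ^ 2 := (le_div_iff₀ hn1).mpr (by linarith [hQP])
  have hinner : ((n - 2) * S + Q) / 2 - 1 / (n - 1) ^ 2 * (P ^ 2 / 2) ≤ (n - 2) * (S / 2) := by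
    have : 1 / (n - 1) ^ 2 * (P ^ 2 / 2) = (P ^ 2 / (n - 1) ^ 2) / 2 := by
      field_simp
    rw [this]
    linarith
  calc 1 / (n - 2) * (((n - 2) * S + Q) / 2 - 1 / (n - 1) ^ 2 * (P ^ 2 / 2))
      ≤ 1 / (n - 2) * ((n - 2) * (S / 2)) := by
        apply mul_le_mul_of_nonneg_left hinner
        positivity
    _ = S / 2 := by
        rw [one_div, inv_mul_cancel_left₀ hn2.ne']
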